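/- For real p·l > 0 and a timelike vector a, the asymptotic radiation integral satisfies the bound |∫₁^∞ du ((l − u⁻² a) e^{i p·(u l + u⁻¹ a)} − l e^{i u p·l})| ≤ (|a| + 4|l||p·a|²) + |l||p·a| |∫_{p·l}^∞ u⁻¹ e^{iu} du|, where the last (oscillatory) integral converges for p·l > 0 and diverges at most logarithmically as p·l → 0⁺. -/

import Mathlib

noncomputable section

open Filter

abbrev E4 : Type := EuclideanSpace ℝ (Fin 4)
abbrev C4 : Type := EuclideanSpace ℂ (Fin 4)

/-- The Minkowski pairing `p·q = p₀q₀ − 𝐩·𝐪` on `ℝ⁴`. -/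
def mink (p q : E4) : ℝ := p 0 * q 0 - ∑ i : Fin 3, p i.succ * q i.succ

/-- Complexification of a real 4-vector. -/
def cpx (v : E4) : C4 := (WithLp.equiv 2 (Fin 4 → ℂ)).symm fun μ => (v μ : ℂ)

open MeasureTheory Set intervalIntegral Complex Topology

lemma norm_cpx (v : E4) : ‖cpx v‖ = ‖v‖ := by
  simp [EuclideanSpace.norm_eq, cpx, WithLp.equiv_symm_apply]

lemma cpx_sub_smul (l a : E4) (c : ℝ) : cpx (l - c • a) = cpx l - (c:ℂ) • cpx a := by
  ext μ
  simp [cpx, WithLp.equiv_symm_apply]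

lemma mink_smul_add (p l a : E4) (u v : ℝ) :
    mink p (u • l + v • a) = u * mink p l + v * mink p a := by
  simp only [mink, PiLp.add_apply, PiLp.smul_apply, smul_eq_mul, mul_add,
    Finset.sum_add_distrib, Finset.mul_sum]
  have h1 : ∀ i : Fin 3, p i.succ * (u * l i.succ) = p i.succ * l i.succ * u := fun i => by ring
  have h2 : ∀ i : Fin 3, p i.succ * (v * a i.succ) = p i.succ * a i.succ * v := fun i => by ring
  rw [Finset.sum_congr rfl fun i _ => h1 i, Finset.sum_congr rfl fun i _ => h2 i,
    ← Finset.sum_mul, ← Finset.sum_mul]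
  ring

lemma exp_taylor_bound (θ : ℝ) : ‖Complex.exp (I * θ) - 1 - I * θ‖ ≤ 3 * θ ^ 2 := by
  rcases le_or_gt |θ| 1 with h | h
  · have := Complex.norm_exp_sub_one_sub_id_le (x := I * θ) (by simpa using h)
    calc ‖Complex.exp (I * θ) - 1 - I * θ‖ ≤ ‖I * (θ:ℂ)‖ ^ 2 := this
    _ = θ ^ 2 := by simp [sq_abs]
    _ ≤ 3 * θ ^ 2 := by nlinarith [sq_nonneg θ]
  · have h1 : ‖Complex.exp (I * θ)‖ = 1 := by
      rw [mul_comm]; exact Complex.norm_exp_ofReal_mul_I θ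
    calc ‖Complex.exp (I * θ) - 1 - I * θ‖
        ≤ ‖Complex.exp (I * θ) - 1‖ + ‖I * (θ:ℂ)‖ := norm_sub_le _ _
      _ ≤ (‖Complex.exp (I * θ)‖ + ‖(1:ℂ)‖) + ‖I * (θ:ℂ)‖ := by
          gcongr; exact norm_sub_le _ _
      _ = 2 + |θ| := by simp [h1]; norm_num
      _ ≤ 3 * θ ^ 2 := by nlinarith [abs_nonneg θ, _root_.sq_abs θ]


/-- Bound on the asymptotic radiation integral: for `p·l > 0` and timelike `a`,
the improper integral `∫₁^∞ ((l − u⁻²a) e^{ip·(ul + u⁻¹a)} − l e^{iu p·l}) du`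
converges (as the limit of `∫₁^T`), the oscillatory integral `∫_{p·l}^∞ u⁻¹e^{iu} du`
converges, and
`‖∫₁^∞ …‖ ≤ (|a| + 4|l||p·a|²) + |l||p·a| |∫_{p·l}^∞ u⁻¹ e^{iu} du|`. -/
theorem radiation_integral_bound (p l a : E4)
    (hpl : 0 < mink p l) (ha : 0 < mink a a) :
    ∃ (I₀ : C4) (J : ℂ),
      Tendsto (fun T : ℝ => ∫ u in (1:ℝ)..T,
          (Complex.exp (Complex.I * (mink p (u • l + u⁻¹ • a) : ℝ)) •
              cpx (l - (u ^ 2)⁻¹ • a)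
            - Complex.exp (Complex.I * ((u * mink p l : ℝ))) • cpx l))
        atTop (nhds I₀) ∧
      Tendsto (fun T : ℝ => ∫ u in (mink p l)..T,
          (u : ℂ)⁻¹ * Complex.exp (Complex.I * (u : ℝ))) atTop (nhds J) ∧
      ‖I₀‖ ≤ (‖a‖ + 4 * ‖l‖ * (mink p a) ^ 2) + ‖l‖ * |mink p a| * ‖J‖ := by
  set α := mink p l with hαdef
  set β := mink p a with hβdef
  have hα : 0 < α := hpl
  have hα0 : α ≠ 0 := hα.ne'
  have hαC : (α:ℂ) ≠ 0 := by exact_mod_cast hα0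
  set F : ℝ → ℂ := fun v => (v:ℂ)⁻¹ * Complex.exp (I * (v:ℝ)) with hFdef
  set g : ℝ → ℂ := fun v => I * ((v:ℂ)^2)⁻¹ * Complex.exp (I * (v:ℝ)) with hgdef
  set G : ℝ → ℂ := fun v => Complex.exp (I * (v:ℝ)) / (I * v) with hGdef
  have hGderiv : ∀ v : ℝ, v ≠ 0 → HasDerivAt G (F v + g v) v := by
    intro v hv
    have hvC : (v:ℂ) ≠ 0 := by exact_mod_cast hv
    have hid : HasDerivAt (fun y : ℝ => (y:ℂ)) 1 v := by
      simpa using (hasDerivAt_id v).ofReal_comp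
    have hnum : HasDerivAt (fun y : ℝ => Complex.exp (I * (y:ℝ))) (I * Complex.exp (I * (v:ℝ))) v := by
      simpa [mul_comm] using (hid.const_mul I).cexp
    have hden : HasDerivAt (fun y : ℝ => I * (y:ℂ)) I v := by
      simpa using hid.const_mul I
    have hne : I * (v:ℂ) ≠ 0 := mul_ne_zero Complex.I_ne_zero hvC
    have hdiv := hnum.div hden hne
    refine HasDerivAt.congr_deriv (f := G) hdiv ?_
    symm
    show (v:ℂ)⁻¹ * Complex.exp (I * (v:ℂ)) + I * ((v:ℂ)^2)⁻¹ * Complex.exp (I * (v:ℂ)) = _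
    have hI2 : (I:ℂ)^2 = -1 := Complex.I_sq
    rw [eq_div_iff (pow_ne_zero 2 hne)]
    have hv1 : (v:ℂ)⁻¹ * v = 1 := inv_mul_cancel₀ hvC
    have hv2 : ((v:ℂ)^2)⁻¹ * (v:ℂ)^2 = 1 := inv_mul_cancel₀ (pow_ne_zero 2 hvC)
    linear_combination (Complex.I^2*Complex.exp (Complex.I * (v:ℂ))*(v:ℂ)) * hv1
      + (Complex.I^3*Complex.exp (Complex.I * (v:ℂ))) * hv2
      + (Complex.I*Complex.exp (Complex.I * (v:ℂ))) * hI2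
  have hcontF : ContinuousOn F {x : ℝ | x ≠ 0} := by
    apply ContinuousOn.mul
    · exact (Complex.continuous_ofReal.continuousOn).inv₀ (fun x hx => by
        exact_mod_cast hx)
    · exact (Complex.continuous_exp.comp
        (continuous_const.mul Complex.continuous_ofReal)).continuousOn
  have hcontg : ContinuousOn g {x : ℝ | x ≠ 0} := by
    apply ContinuousOn.mul
    · apply ContinuousOn.mul continuousOn_const
      exact ((Complex.continuous_ofReal.pow 2).continuousOn).inv₀ (fun x hx => by
        simpa using pow_ne_zero 2 (show (x:ℂ) ≠ 0 by exact_mod_cast hx))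
    · exact (Complex.continuous_exp.comp
        (continuous_const.mul Complex.continuous_ofReal)).continuousOn
  have hsub : ∀ T : ℝ, α ≤ T → uIcc α T ⊆ {x : ℝ | x ≠ 0} := by
    intro T hT x hx
    rw [uIcc_of_le hT] at hx
    exact ne_of_gt (lt_of_lt_of_le hα hx.1)
  have hFT : ∀ T : ℝ, α ≤ T →
      ∫ v in α..T, F v = (G T - G α) - ∫ v in α..T, g v := by
    intro T hT
    have hderiv : ∀ x ∈ uIcc α T, HasDerivAt G (F x + g x) x :=
      fun x hx => hGderiv x (hsub T hT hx)
    have hFii : IntervalIntegrable F volume α T :=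
      (hcontF.mono (hsub T hT)).intervalIntegrable
    have hgii : IntervalIntegrable g volume α T :=
      (hcontg.mono (hsub T hT)).intervalIntegrable
    have heq := integral_eq_sub_of_hasDerivAt hderiv (hFii.add hgii)
    rw [integral_add hFii hgii] at heq
    linear_combination heq
  have hIoisub : Ioi α ⊆ {x : ℝ | x ≠ 0} := fun x hx => ne_of_gt (hα.trans hx)
  have hgint : IntegrableOn g (Ioi α) := by
    apply Integrable.mono' (integrableOn_Ioi_rpow_of_lt (by norm_num : (-2:ℝ) < -1) hα)
    · exact ((hcontg.mono hIoisub).aestronglyMeasurable measurableSet_Ioi)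
    · filter_upwards [ae_restrict_mem measurableSet_Ioi] with v hv
      have hv0 : 0 < v := hα.trans hv
      have : ‖g v‖ = (v^2)⁻¹ := by
        simp [hgdef, norm_mul, Complex.norm_exp_ofReal_mul_I, mul_comm I (v:ℂ),
          abs_of_pos hv0]
      rw [this, Real.rpow_neg hv0.le]
      rw [show ((2:ℝ) = ((2:ℕ):ℝ)) by norm_num, Real.rpow_natCast]
  have hgtend : Tendsto (fun T => ∫ v in α..T, g v) atTop (𝓝 (∫ v in Ioi α, g v)) :=
    intervalIntegral_tendsto_integral_Ioi α hgint tendsto_id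
  have hGtend : Tendsto G atTop (𝓝 0) := by
    refine squeeze_zero_norm' ?_ tendsto_inv_atTop_zero
    filter_upwards [eventually_gt_atTop 0] with T hT
    have : ‖G T‖ = T⁻¹ := by
      simp [hGdef, norm_div, Complex.norm_exp_ofReal_mul_I, mul_comm I (T:ℂ),
        abs_of_pos hT]
    rw [this]
  set J : ℂ := (0 - G α) - ∫ v in Ioi α, g v with hJdef
  have hJ : Tendsto (fun T => ∫ v in α..T, F v) atTop (𝓝 J) := by
    refine Tendsto.congr' ?_ (((hGtend.sub_const (G α)).sub hgtend))
    filter_upwards [eventually_ge_atTop α] with T hT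
    exact (hFT T hT).symm
  set S : Set ℝ := {x : ℝ | x ≠ 0} with hSdef
  set φ : ℝ → ℂ := fun u => -(Complex.exp (I * ((u*α + u⁻¹*β : ℝ):ℂ)) * ((u:ℂ)^2)⁻¹) with hφdef
  set ψ : ℝ → ℂ := fun u => Complex.exp (I * ((u*α:ℝ):ℂ)) *
    (Complex.exp (I * ((u⁻¹*β:ℝ):ℂ)) - 1 - I * ((u⁻¹*β:ℝ):ℂ)) with hψdef
  set χ : ℝ → ℂ := fun u => I * (β:ℂ) * ((u:ℂ)⁻¹) * Complex.exp (I * ((u*α:ℝ):ℂ)) with hχdef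
  have hinv : ContinuousOn (fun u:ℝ => u⁻¹) S :=
    fun x hx => (continuousAt_inv₀ hx).continuousWithinAt
  have hinvC : ContinuousOn (fun u:ℝ => ((u:ℂ))⁻¹) S :=
    (Complex.continuous_ofReal.continuousOn).inv₀ (fun x hx => by exact_mod_cast hx)
  have hinvsqC : ContinuousOn (fun u:ℝ => ((u:ℂ)^2)⁻¹) S :=
    ((Complex.continuous_ofReal.pow 2).continuousOn).inv₀ (fun x hx => by
      simpa using pow_ne_zero 2 (show (x:ℂ) ≠ 0 by exact_mod_cast hx))
  have hoR : ∀ f : ℝ → ℝ, ContinuousOn f S →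
      ContinuousOn (fun u => Complex.exp (I * ((f u :ℝ):ℂ))) S := fun f hf =>
    Complex.continuous_exp.comp_continuousOn
      (continuousOn_const.mul (Complex.continuous_ofReal.comp_continuousOn hf))
  have cont_uα : ContinuousOn (fun u:ℝ => u*α) S := continuousOn_id.mul continuousOn_const
  have cont_invβ : ContinuousOn (fun u:ℝ => u⁻¹*β) S := hinv.mul continuousOn_const
  have hφcont : ContinuousOn φ S :=
    ((hoR _ (cont_uα.add cont_invβ)).mul hinvsqC).neg
  have hψcont : ContinuousOn ψ S :=
    (hoR _ cont_uα).mul (((hoR _ cont_invβ).sub continuousOn_const).sub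
      (continuousOn_const.mul (Complex.continuous_ofReal.comp_continuousOn cont_invβ)))
  have hχcont : ContinuousOn χ S :=
    ((continuousOn_const.mul hinvC).mul (hoR _ cont_uα))
  have hI1sub : Ioi (1:ℝ) ⊆ S := fun x hx => ne_of_gt (lt_trans one_pos hx)
  have hnormexp : ∀ r : ℝ, ‖Complex.exp (I * (r:ℂ))‖ = 1 := fun r => by
    rw [mul_comm]; exact Complex.norm_exp_ofReal_mul_I r
  have hφnormval : ∀ v : ℝ, 0 < v → ‖φ v‖ = (v^2)⁻¹ := by
    intro v hv0
    rw [hφdef]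
    simp only [norm_neg, norm_mul, hnormexp, one_mul, norm_inv, norm_pow,
      Complex.norm_real, Real.norm_eq_abs, abs_of_pos hv0]
  have hψnormle : ∀ v : ℝ, 0 < v → ‖ψ v‖ ≤ 3 * β^2 * (v^2)⁻¹ := by
    intro v hv0
    have h1 : ‖ψ v‖ ≤ 3 * (v⁻¹*β)^2 := by
      rw [hψdef]
      simp only [norm_mul, hnormexp, one_mul]
      exact exp_taylor_bound (v⁻¹*β)
    refine h1.trans (le_of_eq ?_)
    rw [mul_pow, inv_pow]
    ring
  have hrpow2 : ∀ v : ℝ, 0 < v → v ^ (-2:ℝ) = (v^2)⁻¹ := by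
    intro v hv
    rw [Real.rpow_neg hv.le, show ((2:ℝ) = ((2:ℕ):ℝ)) by norm_num, Real.rpow_natCast]
  have hφint : IntegrableOn φ (Ioi 1) := by
    apply Integrable.mono' (integrableOn_Ioi_rpow_of_lt (by norm_num : (-2:ℝ) < -1) one_pos)
    · exact ((hφcont.mono hI1sub).aestronglyMeasurable measurableSet_Ioi)
    · filter_upwards [ae_restrict_mem measurableSet_Ioi] with v hv
      have hv0 : (0:ℝ) < v := lt_trans one_pos hv
      rw [hφnormval v hv0, hrpow2 v hv0]
  have hψint : IntegrableOn ψ (Ioi 1) := by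
    apply Integrable.mono'
      ((integrableOn_Ioi_rpow_of_lt (by norm_num : (-2:ℝ) < -1) one_pos).const_mul (3*β^2))
    · exact ((hψcont.mono hI1sub).aestronglyMeasurable measurableSet_Ioi)
    · filter_upwards [ae_restrict_mem measurableSet_Ioi] with v hv
      have hv0 : (0:ℝ) < v := lt_trans one_pos hv
      rw [hrpow2 v hv0]
      exact hψnormle v hv0
  have hΦt : Tendsto (fun T => ∫ u in (1:ℝ)..T, φ u) atTop (𝓝 (∫ u in Ioi 1, φ u)) :=
    intervalIntegral_tendsto_integral_Ioi 1 hφint tendsto_id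
  have hΨt : Tendsto (fun T => ∫ u in (1:ℝ)..T, ψ u) atTop (𝓝 (∫ u in Ioi 1, ψ u)) :=
    intervalIntegral_tendsto_integral_Ioi 1 hψint tendsto_id
  have hint2 : ∫ x in Ioi (1:ℝ), x ^ (-2:ℝ) = 1 := by
    rw [integral_Ioi_rpow_of_lt (by norm_num) one_pos]
    norm_num
  have hΦnorm : ‖∫ u in Ioi (1:ℝ), φ u‖ ≤ 1 := by
    refine le_trans (norm_integral_le_of_norm_le
      (integrableOn_Ioi_rpow_of_lt (by norm_num : (-2:ℝ) < -1) one_pos) ?_) (le_of_eq hint2)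
    filter_upwards [ae_restrict_mem measurableSet_Ioi] with v hv
    have hv0 : (0:ℝ) < v := lt_trans one_pos hv
    rw [hφnormval v hv0, hrpow2 v hv0]
  have hΨnorm : ‖∫ u in Ioi (1:ℝ), ψ u‖ ≤ 3*β^2 := by
    have h2 : ∫ x in Ioi (1:ℝ), 3*β^2 * x ^ (-2:ℝ) = 3*β^2 := by
      rw [MeasureTheory.integral_const_mul, hint2, mul_one]
    refine le_trans (norm_integral_le_of_norm_le
      ((integrableOn_Ioi_rpow_of_lt (by norm_num : (-2:ℝ) < -1) one_pos).const_mul (3*β^2)) ?_)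
      (le_of_eq h2)
    filter_upwards [ae_restrict_mem measurableSet_Ioi] with v hv
    have hv0 : (0:ℝ) < v := lt_trans one_pos hv
    rw [hrpow2 v hv0]
    exact hψnormle v hv0
  have hχeq : ∀ T : ℝ, ∫ u in (1:ℝ)..T, χ u = (I*(β:ℂ)) * ∫ v in α..(α*T), F v := by
    intro T
    have h1 : ∀ u : ℝ, χ u = (I*(β:ℂ)*(α:ℂ)) * F (α*u) := by
      intro u
      rw [hχdef, hFdef]
      push_cast
      rw [mul_inv]
      rw [mul_comm ((α:ℂ))⁻¹ ((u:ℂ))⁻¹, mul_comm ((α:ℂ)) ((u:ℂ))]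
      rw [show I * (β:ℂ) * (α:ℂ) * ((u:ℂ)⁻¹ * (α:ℂ)⁻¹ * cexp (I * ((u:ℂ) * (α:ℂ))))
        = ((α:ℂ) * (α:ℂ)⁻¹) * (I * (β:ℂ) * (u:ℂ)⁻¹ * cexp (I * ((u:ℂ) * (α:ℂ)))) by ring]
      rw [mul_inv_cancel₀ hαC, one_mul]
    simp_rw [h1]
    rw [intervalIntegral.integral_const_mul, integral_comp_mul_left F hα0]
    rw [mul_one, Complex.real_smul]
    push_cast
    rw [show I * (β:ℂ) * (α:ℂ) * ((α:ℂ)⁻¹ * ∫ v in α..α*T, F v)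
      = ((α:ℂ) * (α:ℂ)⁻¹) * (I * (β:ℂ) * ∫ v in α..α*T, F v) by ring]
    rw [mul_inv_cancel₀ hαC, one_mul]
  have hχtend : Tendsto (fun T => ∫ u in (1:ℝ)..T, χ u) atTop (𝓝 (I*(β:ℂ)*J)) := by
    have hcomp : Tendsto (fun T:ℝ => α*T) atTop atTop :=
      Tendsto.const_mul_atTop hα tendsto_id
    have := (hJ.comp hcomp).const_mul (I*(β:ℂ))
    exact Tendsto.congr (fun T => (hχeq T).symm) this
  have hkey : ∀ u : ℝ,
      (Complex.exp (Complex.I * ((mink p (u • l + u⁻¹ • a) : ℝ):ℂ)) • cpx (l - (u ^ 2)⁻¹ • a)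
        - Complex.exp (Complex.I * ((u * α : ℝ):ℂ)) • cpx l)
      = φ u • cpx a + ψ u • cpx l + χ u • cpx l := by
    intro u
    have hm : mink p (u • l + u⁻¹ • a) = u * α + u⁻¹ * β := mink_smul_add p l a u u⁻¹
    have hexp : Complex.exp (I * ((u*α + u⁻¹*β : ℝ):ℂ)) =
        Complex.exp (I * ((u*α:ℝ):ℂ)) * Complex.exp (I * ((u⁻¹*β:ℝ):ℂ)) := by
      rw [← Complex.exp_add]; congr 1; push_cast; ring
    have hc : (((u^2)⁻¹ : ℝ) : ℂ) = ((u:ℂ)^2)⁻¹ := by push_cast; ring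
    have hib : ((u⁻¹*β : ℝ):ℂ) = (u:ℂ)⁻¹ * (β:ℂ) := by push_cast; ring
    rw [hm, cpx_sub_smul, hφdef, hψdef, hχdef]
    simp only [smul_sub, hexp, hc, hib]
    module
  have hsplit : ∀ T : ℝ, 1 ≤ T →
      (∫ u in (1:ℝ)..T,
          (Complex.exp (Complex.I * ((mink p (u • l + u⁻¹ • a) : ℝ):ℂ)) • cpx (l - (u ^ 2)⁻¹ • a)
            - Complex.exp (Complex.I * ((u * α : ℝ):ℂ)) • cpx l))
      = (∫ u in (1:ℝ)..T, φ u) • cpx a + (∫ u in (1:ℝ)..T, ψ u) • cpx l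
        + (∫ u in (1:ℝ)..T, χ u) • cpx l := by
    intro T hT
    have hsubT : uIcc 1 T ⊆ S := by
      rw [uIcc_of_le hT]
      exact fun x hx => ne_of_gt (lt_of_lt_of_le one_pos hx.1)
    have hφii : IntervalIntegrable (fun u => φ u • cpx a) volume 1 T :=
      ((hφcont.mono hsubT).smul continuousOn_const).intervalIntegrable
    have hψii : IntervalIntegrable (fun u => ψ u • cpx l) volume 1 T :=
      ((hψcont.mono hsubT).smul continuousOn_const).intervalIntegrable
    have hχii : IntervalIntegrable (fun u => χ u • cpx l) volume 1 T :=
      ((hχcont.mono hsubT).smul continuousOn_const).intervalIntegrable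
    rw [intervalIntegral.integral_congr (g := fun u => φ u • cpx a + ψ u • cpx l + χ u • cpx l)
      (fun u _ => hkey u)]
    rw [integral_add (hφii.add hψii) hχii, integral_add hφii hψii,
      intervalIntegral.integral_smul_const, intervalIntegral.integral_smul_const,
      intervalIntegral.integral_smul_const]
  refine ⟨(∫ u in Ioi 1, φ u) • cpx a + (∫ u in Ioi 1, ψ u) • cpx l
      + (I*(β:ℂ)*J) • cpx l, J, ?_, hJ, ?_⟩
  · refine Tendsto.congr' ?_
      (((hΦt.smul_const (cpx a)).add (hΨt.smul_const (cpx l))).add (hχtend.smul_const (cpx l)))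
    filter_upwards [eventually_ge_atTop 1] with T hT
    exact (hsplit T hT).symm
  · have h1 : ‖I*(β:ℂ)*J‖ = |β| * ‖J‖ := by
      simp [norm_mul, Complex.norm_real, Real.norm_eq_abs]
    have h2 : ‖(∫ u in Ioi 1, φ u) • cpx a‖ ≤ ‖a‖ := by
      rw [norm_smul, norm_cpx]
      calc ‖∫ u in Ioi 1, φ u‖ * ‖a‖ ≤ 1 * ‖a‖ := by gcongr
        _ = ‖a‖ := one_mul _
    have h3 : ‖(∫ u in Ioi 1, ψ u) • cpx l‖ ≤ 3*β^2 * ‖l‖ := by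
      rw [norm_smul, norm_cpx]
      gcongr
    have h4 : ‖(I*(β:ℂ)*J) • cpx l‖ = |β| * ‖J‖ * ‖l‖ := by
      rw [norm_smul, norm_cpx, h1]
    calc ‖(∫ u in Ioi 1, φ u) • cpx a + (∫ u in Ioi 1, ψ u) • cpx l + (I*(β:ℂ)*J) • cpx l‖
        ≤ ‖(∫ u in Ioi 1, φ u) • cpx a + (∫ u in Ioi 1, ψ u) • cpx l‖
          + ‖(I*(β:ℂ)*J) • cpx l‖ := norm_add_le _ _
      _ ≤ (‖(∫ u in Ioi 1, φ u) • cpx a‖ + ‖(∫ u in Ioi 1, ψ u) • cpx l‖)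
          + ‖(I*(β:ℂ)*J) • cpx l‖ := by gcongr; exact norm_add_le _ _
      _ ≤ (‖a‖ + 3*β^2*‖l‖) + |β| * ‖J‖ * ‖l‖ := by
          rw [h4]; gcongr
      _ ≤ (‖a‖ + 4 * ‖l‖ * β ^ 2) + ‖l‖ * |β| * ‖J‖ := by
          nlinarith [norm_nonneg l, sq_nonneg β]
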